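/- Let n ≥ 1 and let p, q be integers with 0 ≤ p, q ≤ n. Let f¹, f² : {1, …, n} → ℂ, and let α¹, α² be complex-valued functions on the set of pairs (I, J) of subsets of {1, …, n} with |I| = p and |J| = q. Then Σ |f¹(m)| · |f²(m')| · |α¹(I, J)| · |α²(I, J')| ≤ n · binom(n, q) · ‖f¹‖ · ‖f²‖ · ‖α¹‖ · ‖α²‖, where the sum runs over all tuples (I, J, J', m, m') with I, J, J' subsets of {1, …, n}, |I| = p, |J| = |J'| = q, m, m' ∈ {1, …, n}, m ∉ J, m' ∉ J', and {m} ∪ J = {m'} ∪ J', and where ‖f^l‖² := Σ_{m=1}^n |f^l(m)|² and ‖α^l‖² := Σ_{|I|=p, |J|=q} |α^l(I, J)|². -/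

import Mathlib

open Finset

private lemma sum_ite_le_of_unique {α : Type*} [Fintype α] [DecidableEq α]
    {c : Prop} [Decidable c] {P : α → Prop} [DecidablePred P] {x : ℝ} (hx : 0 ≤ x)
    (a : α) (h : ∀ b, P b → b = a) (hc : ∀ b, P b → c) :
    ∑ b : α, (if P b then x else 0) ≤ if c then x else 0 := by
  by_cases hcc : c
  · simp only [hcc, if_true]
    calc ∑ b : α, (if P b then x else 0) ≤ ∑ b : α, (if b = a then x else 0) := by
          apply Finset.sum_le_sum
          intro b _
          by_cases hb : P b
          · rw [if_pos hb, if_pos (h b hb)]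
          · rw [if_neg hb]
            split
            · exact hx
            · exact le_refl 0
      _ = x := by simp
  · have hnone : ∀ b, ¬ P b := fun b hb => hcc (hc b hb)
    simp [hnone, hcc]


set_option maxHeartbeats 1000000

/-- The coefficient-level Cauchy–Schwarz estimate behind the pointwise
bound `|⟨η₁ ∧ α₁, η₂ ∧ α₂⟩_ω| ≤ n·C(n,q)·‖η₁‖‖η₂‖‖α₁‖‖α₂‖` for `(0,1)`-forms `η` and
`(p,q)`-forms `α` on an `n`-dimensional Kähler manifold. -/
theorem coefficient_wedge_estimate (n p q : ℕ) (hn : 1 ≤ n) (hp : p ≤ n) (hq : q ≤ n)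
    (f1 f2 : Fin n → ℂ)
    (a1 a2 : Finset (Fin n) → Finset (Fin n) → ℂ) :
    ∑ t ∈ Finset.univ.filter
        (fun t : Finset (Fin n) × Finset (Fin n) × Finset (Fin n) × Fin n × Fin n =>
          t.1.card = p ∧ t.2.1.card = q ∧ t.2.2.1.card = q ∧
          t.2.2.2.1 ∉ t.2.1 ∧ t.2.2.2.2 ∉ t.2.2.1 ∧
          insert t.2.2.2.1 t.2.1 = insert t.2.2.2.2 t.2.2.1),
        (‖f1 t.2.2.2.1‖ * ‖f2 t.2.2.2.2‖ *
          ‖a1 t.1 t.2.1‖ * ‖a2 t.1 t.2.2.1‖)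
    ≤ (n : ℝ) * (n.choose q : ℝ) *
      Real.sqrt (∑ m : Fin n, ‖f1 m‖ ^ 2) *
      Real.sqrt (∑ m : Fin n, ‖f2 m‖ ^ 2) *
      Real.sqrt (∑ IJ ∈ Finset.univ.filter
          (fun IJ : Finset (Fin n) × Finset (Fin n) => IJ.1.card = p ∧ IJ.2.card = q),
        ‖a1 IJ.1 IJ.2‖ ^ 2) *
      Real.sqrt (∑ IJ ∈ Finset.univ.filter
          (fun IJ : Finset (Fin n) × Finset (Fin n) => IJ.1.card = p ∧ IJ.2.card = q),
        ‖a2 IJ.1 IJ.2‖ ^ 2) := by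
  classical
  set S : Finset (Finset (Fin n) × Finset (Fin n) × Finset (Fin n) × Fin n × Fin n) :=
    Finset.univ.filter
      (fun t : Finset (Fin n) × Finset (Fin n) × Finset (Fin n) × Fin n × Fin n =>
        t.1.card = p ∧ t.2.1.card = q ∧ t.2.2.1.card = q ∧
        t.2.2.2.1 ∉ t.2.1 ∧ t.2.2.2.2 ∉ t.2.2.1 ∧
        insert t.2.2.2.1 t.2.1 = insert t.2.2.2.2 t.2.2.1) with hS
  set Sf1 := ∑ m : Fin n, ‖f1 m‖ ^ 2 with hSf1
  set Sf2 := ∑ m : Fin n, ‖f2 m‖ ^ 2 with hSf2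
  set Sa1 := ∑ IJ ∈ Finset.univ.filter
      (fun IJ : Finset (Fin n) × Finset (Fin n) => IJ.1.card = p ∧ IJ.2.card = q),
    ‖a1 IJ.1 IJ.2‖ ^ 2 with hSa1
  set Sa2 := ∑ IJ ∈ Finset.univ.filter
      (fun IJ : Finset (Fin n) × Finset (Fin n) => IJ.1.card = p ∧ IJ.2.card = q),
    ‖a2 IJ.1 IJ.2‖ ^ 2 with hSa2
  have key1 : ∑ t ∈ S, (‖f1 t.2.2.2.1‖ * ‖a1 t.1 t.2.1‖) ^ 2
      ≤ (n : ℝ) * (Sf1 * Sa1) := by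
    rw [hS, Finset.sum_filter]
    simp only [Fintype.sum_prod_type]
    have reorder : ∀ (F : Finset (Fin n) → Fin n → Fin n → ℝ),
        (∑ J' : Finset (Fin n), ∑ m : Fin n, ∑ m' : Fin n, F J' m m')
        = ∑ m : Fin n, ∑ m' : Fin n, ∑ J' : Finset (Fin n), F J' m m' := by
      intro F
      rw [Finset.sum_comm]
      exact Finset.sum_congr rfl fun m _ => Finset.sum_comm
    calc (∑ I : Finset (Fin n), ∑ J : Finset (Fin n), ∑ J' : Finset (Fin n),
            ∑ m : Fin n, ∑ m' : Fin n,
            if I.card = p ∧ J.card = q ∧ J'.card = q ∧ m ∉ J ∧ m' ∉ J' ∧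
              insert m J = insert m' J'
            then (‖f1 m‖ * ‖a1 I J‖) ^ 2 else 0)
        ≤ ∑ I : Finset (Fin n), ∑ J : Finset (Fin n),
            (if I.card = p ∧ J.card = q then
              (n : ℝ) * (Sf1 * ‖a1 I J‖ ^ 2) else 0) := by
          apply Finset.sum_le_sum
          intro I _
          apply Finset.sum_le_sum
          intro J _
          rw [reorder]
          calc (∑ m : Fin n, ∑ m' : Fin n, ∑ J' : Finset (Fin n),
                  if I.card = p ∧ J.card = q ∧ J'.card = q ∧ m ∉ J ∧ m' ∉ J' ∧
                    insert m J = insert m' J'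
                  then (‖f1 m‖ * ‖a1 I J‖) ^ 2 else 0)
              ≤ ∑ m : Fin n, ∑ m' : Fin n,
                  (if I.card = p ∧ J.card = q then
                    (‖f1 m‖ * ‖a1 I J‖) ^ 2 else 0) := by
                apply Finset.sum_le_sum
                intro m _
                apply Finset.sum_le_sum
                intro m' _
                refine sum_ite_le_of_unique (by positivity) ((insert m J).erase m')
                  (fun J' hJ' => ?_) (fun J' hJ' => ⟨hJ'.1, hJ'.2.1⟩)
                obtain ⟨-, -, -, -, h5, h6⟩ := hJ'
                rw [h6, Finset.erase_insert h5]
            _ = if I.card = p ∧ J.card = q then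
                  (n : ℝ) * (Sf1 * ‖a1 I J‖ ^ 2) else 0 := by
                by_cases hpq : I.card = p ∧ J.card = q
                · simp only [hpq.1, hpq.2, eq_self_iff_true, and_self, if_true,
                    Finset.sum_const, card_univ, Fintype.card_fin, nsmul_eq_mul, mul_pow]
                  rw [← Finset.mul_sum, ← Finset.sum_mul, hSf1]
                · simp [hpq]
      _ = (n : ℝ) * (Sf1 * Sa1) := by
          rw [hSa1, Finset.sum_filter]
          simp only [Fintype.sum_prod_type, Finset.mul_sum, mul_ite, mul_zero]
  have key2 : ∑ t ∈ S, (‖f2 t.2.2.2.2‖ * ‖a2 t.1 t.2.2.1‖) ^ 2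
      ≤ (n : ℝ) * (Sf2 * Sa2) := by
    rw [hS, Finset.sum_filter]
    simp only [Fintype.sum_prod_type]
    have reorder2 : ∀ (F : Finset (Fin n) → Finset (Fin n) → Fin n → Fin n → ℝ),
        (∑ J : Finset (Fin n), ∑ J' : Finset (Fin n), ∑ m : Fin n, ∑ m' : Fin n, F J J' m m')
        = ∑ J' : Finset (Fin n), ∑ m' : Fin n, ∑ m : Fin n, ∑ J : Finset (Fin n),
            F J J' m m' := by
      intro F
      calc (∑ J : Finset (Fin n), ∑ J' : Finset (Fin n), ∑ m : Fin n, ∑ m' : Fin n, F J J' m m')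
          = ∑ J' : Finset (Fin n), ∑ J : Finset (Fin n), ∑ m : Fin n, ∑ m' : Fin n,
              F J J' m m' := Finset.sum_comm
        _ = ∑ J' : Finset (Fin n), ∑ m : Fin n, ∑ J : Finset (Fin n), ∑ m' : Fin n,
              F J J' m m' := Finset.sum_congr rfl fun J' _ => Finset.sum_comm
        _ = ∑ J' : Finset (Fin n), ∑ m : Fin n, ∑ m' : Fin n, ∑ J : Finset (Fin n),
              F J J' m m' :=
            Finset.sum_congr rfl fun J' _ => Finset.sum_congr rfl fun m _ => Finset.sum_comm
        _ = ∑ J' : Finset (Fin n), ∑ m' : Fin n, ∑ m : Fin n, ∑ J : Finset (Fin n),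
              F J J' m m' := Finset.sum_congr rfl fun J' _ => Finset.sum_comm
    calc (∑ I : Finset (Fin n), ∑ J : Finset (Fin n), ∑ J' : Finset (Fin n),
            ∑ m : Fin n, ∑ m' : Fin n,
            if I.card = p ∧ J.card = q ∧ J'.card = q ∧ m ∉ J ∧ m' ∉ J' ∧
              insert m J = insert m' J'
            then (‖f2 m'‖ * ‖a2 I J'‖) ^ 2 else 0)
        ≤ ∑ I : Finset (Fin n), ∑ J' : Finset (Fin n),
            (if I.card = p ∧ J'.card = q then
              (n : ℝ) * (Sf2 * ‖a2 I J'‖ ^ 2) else 0) := by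
          apply Finset.sum_le_sum
          intro I _
          rw [reorder2]
          apply Finset.sum_le_sum
          intro J' _
          calc (∑ m' : Fin n, ∑ m : Fin n, ∑ J : Finset (Fin n),
                  if I.card = p ∧ J.card = q ∧ J'.card = q ∧ m ∉ J ∧ m' ∉ J' ∧
                    insert m J = insert m' J'
                  then (‖f2 m'‖ * ‖a2 I J'‖) ^ 2 else 0)
              ≤ ∑ m' : Fin n, ∑ m : Fin n,
                  (if I.card = p ∧ J'.card = q then
                    (‖f2 m'‖ * ‖a2 I J'‖) ^ 2 else 0) := by
                apply Finset.sum_le_sum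
                intro m' _
                apply Finset.sum_le_sum
                intro m _
                refine sum_ite_le_of_unique (by positivity) ((insert m' J').erase m)
                  (fun J hJ => ?_) (fun J hJ => ⟨hJ.1, hJ.2.2.1⟩)
                obtain ⟨-, -, -, h4, -, h6⟩ := hJ
                rw [← h6, Finset.erase_insert h4]
            _ = if I.card = p ∧ J'.card = q then
                  (n : ℝ) * (Sf2 * ‖a2 I J'‖ ^ 2) else 0 := by
                by_cases hpq : I.card = p ∧ J'.card = q
                · simp only [hpq.1, hpq.2, eq_self_iff_true, and_self, if_true,
                    Finset.sum_const, card_univ, Fintype.card_fin, nsmul_eq_mul, mul_pow]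
                  rw [← Finset.mul_sum, ← Finset.sum_mul, hSf2]
                · simp [hpq]
      _ = (n : ℝ) * (Sf2 * Sa2) := by
          rw [hSa2, Finset.sum_filter]
          simp only [Fintype.sum_prod_type, Finset.mul_sum, mul_ite, mul_zero]
  have h1 : 0 ≤ Sf1 := Finset.sum_nonneg fun _ _ => sq_nonneg _
  have h2 : 0 ≤ Sf2 := Finset.sum_nonneg fun _ _ => sq_nonneg _
  have h3 : 0 ≤ Sa1 := Finset.sum_nonneg fun _ _ => sq_nonneg _
  have h4 : 0 ≤ Sa2 := Finset.sum_nonneg fun _ _ => sq_nonneg _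
  have e1 : (∑ t ∈ S, (‖f1 t.2.2.2.1‖ * ‖f2 t.2.2.2.2‖ *
        ‖a1 t.1 t.2.1‖ * ‖a2 t.1 t.2.2.1‖))
      = ∑ t ∈ S, (‖f1 t.2.2.2.1‖ * ‖a1 t.1 t.2.1‖) *
          (‖f2 t.2.2.2.2‖ * ‖a2 t.1 t.2.2.1‖) :=
    Finset.sum_congr rfl fun t _ => by ring
  rw [e1]
  calc (∑ t ∈ S, (‖f1 t.2.2.2.1‖ * ‖a1 t.1 t.2.1‖) *
          (‖f2 t.2.2.2.2‖ * ‖a2 t.1 t.2.2.1‖))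
      ≤ Real.sqrt (∑ t ∈ S, (‖f1 t.2.2.2.1‖ * ‖a1 t.1 t.2.1‖) ^ 2) *
        Real.sqrt (∑ t ∈ S, (‖f2 t.2.2.2.2‖ * ‖a2 t.1 t.2.2.1‖) ^ 2) :=
        Real.sum_mul_le_sqrt_mul_sqrt S _ _
    _ ≤ Real.sqrt ((n : ℝ) * (Sf1 * Sa1)) * Real.sqrt ((n : ℝ) * (Sf2 * Sa2)) :=
        mul_le_mul (Real.sqrt_le_sqrt key1) (Real.sqrt_le_sqrt key2)
          (Real.sqrt_nonneg _) (Real.sqrt_nonneg _)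
    _ = (n : ℝ) * (Real.sqrt Sf1 * Real.sqrt Sf2 * Real.sqrt Sa1 * Real.sqrt Sa2) := by
        rw [Real.sqrt_mul (Nat.cast_nonneg n), Real.sqrt_mul (Nat.cast_nonneg n),
          Real.sqrt_mul h1, Real.sqrt_mul h2]
        have hnn : Real.sqrt (n : ℝ) * Real.sqrt (n : ℝ) = (n : ℝ) :=
          Real.mul_self_sqrt (Nat.cast_nonneg n)
        linear_combination (Real.sqrt Sf1 * Real.sqrt Sa1 * Real.sqrt Sf2 * Real.sqrt Sa2) * hnn
    _ ≤ (n : ℝ) * (n.choose q : ℝ) * Real.sqrt Sf1 * Real.sqrt Sf2 *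
          Real.sqrt Sa1 * Real.sqrt Sa2 := by
        have hC : (1 : ℝ) ≤ (n.choose q : ℝ) := Nat.one_le_cast.mpr (Nat.choose_pos hq)
        have hP : 0 ≤ Real.sqrt Sf1 * Real.sqrt Sf2 * Real.sqrt Sa1 * Real.sqrt Sa2 := by
          positivity
        calc (n : ℝ) * (Real.sqrt Sf1 * Real.sqrt Sf2 * Real.sqrt Sa1 * Real.sqrt Sa2)
            ≤ ((n : ℝ) * (n.choose q : ℝ)) *
              (Real.sqrt Sf1 * Real.sqrt Sf2 * Real.sqrt Sa1 * Real.sqrt Sa2) :=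
              mul_le_mul_of_nonneg_right
                (le_mul_of_one_le_right (Nat.cast_nonneg n) hC) hP
          _ = (n : ℝ) * (n.choose q : ℝ) * Real.sqrt Sf1 * Real.sqrt Sf2 *
              Real.sqrt Sa1 * Real.sqrt Sa2 := by ring
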